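/- Let λ > 2. For every real number x with 1 < x < λ/2 (and likewise for every x with −λ/2 < x < −1), the complex number x does not belong to the closure in ℂ of the orbit {g • i : g ∈ Γ_λ}, where i is the imaginary unit of the upper half-plane and • is the Möbius action. (Equivalently: the open intervals (1, λ/2) and (−λ/2, −1), which represent the funnel of the infinite-area Hecke triangle surface, are disjoint from the limit set of Γ_λ.) -/

import Mathlib

open scoped MatrixGroups UpperHalfPlane
open Matrix

/-- Words of the form `S * T^m₁ * (S * T^m₂ * (⋯ * (S * T^mₖ)))`. -/
def heckeW (S T : SL(2, ℝ)) : List ℤ → SL(2, ℝ)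
  | [] => 1
  | m :: l => S * T ^ m * heckeW S T l

lemma mem_dropLast_cons {a m : ℤ} {l : List ℤ} (h : m ∈ (a :: l).dropLast) :
    m = a ∨ m ∈ l.dropLast := by
  cases l with
  | nil => simp at h
  | cons b l' =>
    rw [List.dropLast_cons₂] at h
    rcases List.mem_cons.mp h with h | h
    · exact Or.inl h
    · exact Or.inr h

lemma mem_dropLast_cons_of {a m : ℤ} {l : List ℤ} (h : m ∈ l.dropLast) :
    m ∈ (a :: l).dropLast := by
  cases l with
  | nil => simp at h
  | cons b l' =>
    rw [List.dropLast_cons₂]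
    exact List.mem_cons_of_mem _ h

/-- Normal form: `g = T^n * w` or `g = S*S*(T^n*w)` with `w` a word starting with `S`. -/
def heckeD (S T : SL(2, ℝ)) (g : SL(2, ℝ)) : Prop :=
  ∃ (n : ℤ) (l : List ℤ), (∀ m ∈ l.dropLast, m ≠ 0) ∧
    (g = T ^ n * heckeW S T l ∨ g = S * S * (T ^ n * heckeW S T l))

/-- For `λ > 2`, the intervals `(1, λ/2)` and `(−λ/2, −1)` (representing
the funnel of the infinite-area Hecke triangle surface) are disjoint from the limit set
of `Γ_λ`, i.e. from the set of accumulation points in `ℂ` of the orbit `Γ_λ • i`. -/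
theorem funnel_interval_not_in_limit_set
    (lam : ℝ) (hlam : 2 < lam)
    (S T : SL(2, ℝ))
    (hS : (S : Matrix (Fin 2) (Fin 2) ℝ) = !![0, 1; -1, 0])
    (hT : (T : Matrix (Fin 2) (Fin 2) ℝ) = !![1, lam; 0, 1])
    (Γ : Subgroup SL(2, ℝ)) (hΓ : Γ = Subgroup.closure {S, T}) :
    ∀ x : ℝ, ((1 < x ∧ x < lam / 2) ∨ (-lam / 2 < x ∧ x < -1)) →
      ((x : ℂ) ∉ closure {w : ℂ | ∃ g ∈ Γ, w = ((g • UpperHalfPlane.I : ℍ) : ℂ)}) := by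
  -- the general action formula
  have act : ∀ (g : SL(2, ℝ)) (z : ℍ), ((g • z : ℍ) : ℂ) =
      (((g : Matrix (Fin 2) (Fin 2) ℝ) 0 0 : ℝ) * z + ((g : Matrix (Fin 2) (Fin 2) ℝ) 0 1 : ℝ)) /
        (((g : Matrix (Fin 2) (Fin 2) ℝ) 1 0 : ℝ) * z + ((g : Matrix (Fin 2) (Fin 2) ℝ) 1 1 : ℝ)) := by
    intro g z
    rw [UpperHalfPlane.specialLinearGroup_apply]
    simp
  -- basic matrix algebra
  have hSS : ((S * S : SL(2, ℝ)) : Matrix (Fin 2) (Fin 2) ℝ) = -1 := by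
    show (S : Matrix (Fin 2) (Fin 2) ℝ) * (S : Matrix (Fin 2) (Fin 2) ℝ) = -1
    rw [hS, Matrix.mul_fin_two, Matrix.one_fin_two]
    norm_num
  have hcen : ∀ u : SL(2, ℝ), (S * S) * u = u * (S * S) := by
    intro u
    apply Subtype.ext
    simp only [Matrix.SpecialLinearGroup.coe_mul] at hSS ⊢
    rw [show (S : Matrix (Fin 2) (Fin 2) ℝ) * S = -1 from hSS]
    simp
  have hSS1 : (S * S) * (S * S) = 1 := by
    apply Subtype.ext
    simp only [Matrix.SpecialLinearGroup.coe_mul] at hSS ⊢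
    rw [show (S : Matrix (Fin 2) (Fin 2) ℝ) * S = -1 from hSS]
    simp
  have hSinv : S⁻¹ = S * S * S := by
    have : S * (S * S * S) = 1 := by
      rw [show S * (S * S * S) = (S * S) * (S * S) by group]
      exact hSS1
    exact inv_eq_of_mul_eq_one_right this |>.symm ▸ (eq_inv_of_mul_eq_one_right this).symm
  -- action of the generators
  have actS : ∀ z : ℍ, ((S • z : ℍ) : ℂ) = 1 / (-(z : ℂ)) := by
    intro z
    rw [act, hS]
    norm_num
  have actT : ∀ z : ℍ, ((T • z : ℍ) : ℂ) = (z : ℂ) + lam := by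
    intro z
    rw [act, hT]
    norm_num
  have actTinv : ∀ z : ℍ, ((T⁻¹ • z : ℍ) : ℂ) = (z : ℂ) - lam := by
    intro z
    have h := actT (T⁻¹ • z)
    rw [smul_inv_smul] at h
    rw [h]; ring
  have actTz : ∀ (n : ℤ) (z : ℍ), ((T ^ n • z : ℍ) : ℂ) = (z : ℂ) + (n : ℂ) * lam := by
    intro n
    induction n using Int.induction_on with
    | zero => intro z; simp
    | succ k ih =>
      intro z
      have : T ^ ((k : ℤ) + 1) = T * T ^ (k : ℤ) := by
        rw [add_comm, _root_.zpow_add, zpow_one]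
      rw [this, mul_smul, actT, ih]
      push_cast; ring
    | pred k ih =>
      intro z
      have : T ^ (-(k : ℤ) - 1) = T⁻¹ * T ^ (-(k : ℤ)) := by
        rw [sub_eq_add_neg, add_comm, _root_.zpow_add, _root_.zpow_neg_one]
      rw [this, mul_smul, actTinv, ih]
      push_cast; ring
  have actSS : ∀ z : ℍ, (S * S) • z = z := by
    intro z
    apply UpperHalfPlane.ext
    rw [act, hSS]
    norm_num
  -- the key estimate: words starting with S map i into the closed unit disk
  have absW : ∀ l : List ℤ, (∀ m ∈ l.dropLast, m ≠ 0) →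
      ‖((heckeW S T l • UpperHalfPlane.I : ℍ) : ℂ)‖ ≤ 1 := by
    intro l
    induction l with
    | nil =>
      intro _
      simp [heckeW, UpperHalfPlane.coe_I]
    | cons m l ih =>
      intro hcond
      have hz' : ‖((heckeW S T l • UpperHalfPlane.I : ℍ) : ℂ)‖ ≤ 1 := by
        refine ih fun m' hm' => hcond m' ?_
        cases l with
        | nil => simp at hm'
        | cons b l' => rw [List.dropLast_cons₂]; exact List.mem_cons_of_mem _ hm'
      set z' : ℍ := heckeW S T l • UpperHalfPlane.I with hz'def
      have key : (1 : ℝ) ≤ ‖((T ^ m • z' : ℍ) : ℂ)‖ := by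
        rw [actTz]
        cases l with
        | nil =>
          -- z' = I
          have : (z' : ℂ) = Complex.I := by
            rw [hz'def]; simp [heckeW, UpperHalfPlane.coe_I]
          rw [this]
          calc (1 : ℝ) = |(Complex.I + (m : ℂ) * lam).im| := by simp
            _ ≤ ‖(Complex.I + (m : ℂ) * lam)‖ := Complex.abs_im_le_norm _
        | cons b l' =>
          have hm : m ≠ 0 := by
            refine hcond m ?_
            rw [List.dropLast_cons₂]; exact List.mem_cons_self
          have h1 : (1 : ℝ) ≤ |(m : ℝ)| := by
            exact_mod_cast Int.one_le_abs hm
          have h4 := norm_sub_le ((z' : ℂ) + (m : ℂ) * lam) (z' : ℂ)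
          rw [show ((z' : ℂ) + (m : ℂ) * lam) - z' = (m : ℂ) * lam by ring] at h4
          have h5 : ‖((m : ℂ) * lam)‖ = |(m : ℝ)| * lam := by
            rw [norm_mul, Complex.norm_intCast, Complex.norm_real, Real.norm_eq_abs,
              abs_of_pos (by linarith : (0:ℝ) < lam)]
          nlinarith
      have hne : ((T ^ m • z' : ℍ) : ℂ) ≠ 0 := UpperHalfPlane.ne_zero _
      have : heckeW S T (m :: l) • UpperHalfPlane.I = S • (T ^ m • z') := by
        rw [heckeW, hz'def, mul_smul, mul_smul]
      rw [this, actS]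
      rw [norm_div, norm_one, norm_neg]
      rw [div_le_one (by positivity)]
      exact key
  -- group identities
  have hS4 : S * S * S * S = 1 := by rw [mul_assoc (S * S)]; exact hSS1
  have hTT : ∀ n : ℤ, T * T ^ n = T ^ (n + 1) := by
    intro n; rw [← _root_.zpow_one_add, add_comm]
  have hTiT : ∀ n : ℤ, T⁻¹ * T ^ n = T ^ (n - 1) := by
    intro n; rw [← _root_.zpow_neg_one, ← _root_.zpow_add, neg_add_eq_sub]
  have hcommg : ∀ v u : SL(2, ℝ), v * (S * S * u) = S * S * (v * u) := by
    intro v u; rw [← mul_assoc, ← hcen v, mul_assoc]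
  -- the steps
  have stepT : ∀ g, heckeD S T g → heckeD S T (T * g) := by
    rintro g ⟨n, l, hl, rfl | rfl⟩
    · exact ⟨n + 1, l, hl, Or.inl (by rw [← mul_assoc, hTT])⟩
    · exact ⟨n + 1, l, hl, Or.inr (by rw [hcommg T, ← mul_assoc T, hTT])⟩
  have stepTinv : ∀ g, heckeD S T g → heckeD S T (T⁻¹ * g) := by
    rintro g ⟨n, l, hl, rfl | rfl⟩
    · exact ⟨n - 1, l, hl, Or.inl (by rw [← mul_assoc, hTiT])⟩
    · exact ⟨n - 1, l, hl, Or.inr (by rw [hcommg T⁻¹, ← mul_assoc T⁻¹, hTiT])⟩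
  have stepS : ∀ g, heckeD S T g → heckeD S T (S * g) := by
    rintro g ⟨n, l, hl, rfl | rfl⟩
    · by_cases hn : n = 0
      · subst hn
        cases l with
        | nil =>
          refine ⟨0, [0], by simp, Or.inl ?_⟩
          simp only [heckeW, zpow_zero, one_mul, mul_one]
        | cons m l' =>
          refine ⟨m, l', fun m' hm' => hl m' (mem_dropLast_cons_of hm'), Or.inr ?_⟩
          simp only [heckeW, zpow_zero, one_mul, ← mul_assoc]
      · refine ⟨0, n :: l, ?_, Or.inl ?_⟩
        · intro m hm
          rcases mem_dropLast_cons hm with rfl | hm'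
          · exact hn
          · exact hl m hm'
        · simp only [heckeW, zpow_zero, one_mul, ← mul_assoc]
    · by_cases hn : n = 0
      · subst hn
        cases l with
        | nil =>
          refine ⟨0, [0], by simp, Or.inr ?_⟩
          simp only [heckeW, zpow_zero, one_mul, mul_one, ← mul_assoc]
        | cons m l' =>
          refine ⟨m, l', fun m' hm' => hl m' (mem_dropLast_cons_of hm'), Or.inl ?_⟩
          simp only [heckeW, zpow_zero, one_mul, ← mul_assoc]
          rw [hS4, one_mul]
      · refine ⟨0, n :: l, ?_, Or.inr ?_⟩
        · intro m hm
          rcases mem_dropLast_cons hm with rfl | hm'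
          · exact hn
          · exact hl m hm'
        · simp only [heckeW, zpow_zero, one_mul, ← mul_assoc]
  have stepSinv : ∀ g, heckeD S T g → heckeD S T (S⁻¹ * g) := by
    intro g hg
    have h3 := stepS _ (stepS _ (stepS _ hg))
    have : S⁻¹ * g = S * (S * (S * g)) := by
      rw [hSinv]; simp only [mul_assoc]
    rwa [this]
  -- every element of the group has normal form
  have structD : ∀ g ∈ Subgroup.closure {S, T}, heckeD S T g := by
    intro g hg
    induction hg using Subgroup.closure_induction_left with
    | one => exact ⟨0, [], by simp, Or.inl (by simp [heckeW])⟩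
    | mul_left x hx y hy ih =>
      simp only [Set.mem_insert_iff, Set.mem_singleton_iff] at hx
      rcases hx with rfl | rfl
      · exact stepS _ ih
      · exact stepT _ ih
    | inv_mul_cancel x hx y hy ih =>
      simp only [Set.mem_insert_iff, Set.mem_singleton_iff] at hx
      rcases hx with rfl | rfl
      · exact stepSinv _ ih
      · exact stepTinv _ ih
  -- the orbit of i is within distance 1 of some lattice point n·λ
  have orbit : ∀ g ∈ Γ, ∃ n : ℤ,
      ‖(((g • UpperHalfPlane.I : ℍ) : ℂ) - (n : ℂ) * lam)‖ ≤ 1 := by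
    intro g hg
    rw [hΓ] at hg
    obtain ⟨n, l, hl, hc⟩ := structD g hg
    refine ⟨n, ?_⟩
    have hco : ((g • UpperHalfPlane.I : ℍ) : ℂ) =
        ((heckeW S T l • UpperHalfPlane.I : ℍ) : ℂ) + (n : ℂ) * lam := by
      rcases hc with rfl | rfl
      · rw [mul_smul, actTz]
      · rw [mul_smul, actSS, mul_smul, actTz]
    rw [hco, add_sub_cancel_right]
    exact absW l hl
  -- conclusion
  intro x hx hmem
  have hxabs : 1 < |x| ∧ |x| < lam / 2 := by
    rcases hx with ⟨h1, h2⟩ | ⟨h1, h2⟩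
    · rw [abs_of_pos (by linarith)]; exact ⟨h1, h2⟩
    · rw [abs_of_neg (by linarith)]; constructor <;> linarith
  have hrpos : (0 : ℝ) < min |x| (lam - |x|) - 1 := by
    have h1 : (1 : ℝ) < |x| := hxabs.1
    have h2 : (1 : ℝ) < lam - |x| := by
      have := hxabs.2; linarith
    have := lt_min h1 h2
    linarith
  rw [Metric.mem_closure_iff] at hmem
  obtain ⟨w, hw, hdist⟩ := hmem _ hrpos
  obtain ⟨g, hgΓ, rfl⟩ := hw
  obtain ⟨n, hn⟩ := orbit g hgΓ
  set w : ℂ := ((g • UpperHalfPlane.I : ℍ) : ℂ) with hwdef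
  have htri : ‖((x : ℂ) - (n : ℂ) * lam)‖ ≤
      ‖((x : ℂ) - w)‖ + ‖(w - (n : ℂ) * lam)‖ :=
    norm_sub_le_norm_sub_add_norm_sub _ _ _
  have hreal : ‖((x : ℂ) - (n : ℂ) * lam)‖ = |x - (n : ℝ) * lam| := by
    rw [show (x : ℂ) - (n : ℂ) * lam = ((x - (n : ℝ) * lam : ℝ) : ℂ) by push_cast; ring]
    rw [Complex.norm_real, Real.norm_eq_abs]
  have hlow : min |x| (lam - |x|) ≤ |x - (n : ℝ) * lam| := by
    rcases eq_or_ne n 0 with rfl | hn0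
    · simp only [Int.cast_zero, zero_mul, sub_zero]; exact min_le_left |x| (lam - |x|)
    · have h1 : (1 : ℝ) ≤ |(n : ℝ)| := by exact_mod_cast Int.one_le_abs hn0
      have h2 : |(n : ℝ) * lam| - |x| ≤ |(n : ℝ) * lam - x| := abs_sub_abs_le_abs_sub _ _
      rw [abs_sub_comm] at h2
      have h3 : |(n : ℝ) * lam| = |(n : ℝ)| * lam := by
        rw [abs_mul, abs_of_pos (by linarith : (0 : ℝ) < lam)]
      have h4 : lam - |x| ≤ |x - (n : ℝ) * lam| := by nlinarith
      exact le_trans (min_le_right _ _) h4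
  have hdist' : ‖((x : ℂ) - w)‖ < min |x| (lam - |x|) - 1 := by
    rw [← Complex.dist_eq]; exact hdist
  rw [hreal] at htri
  linarith
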